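/- Let G be a finite simple graph, B a corruption instance, r a report consistent with B, and let H' be the subgraph of G induced on the truthful set T = V \ B. Then every connected component of H' is also a connected component of the agreement graph H = H(r): for every truthful vertex u ∉ B, the set of vertices reachable from u in H' equals the set of vertices reachable from u in H. -/

import Mathlib

open scoped Classical

/-- A report `r` is consistent with corruption instance `B` if every truthful vertex
(`u ∉ B`) reports the true type of each of its neighbors. -/
def Consistent {V : Type*} (G : SimpleGraph V) (r : V × V → Bool) (B : Finset V) : Prop :=
  ∀ u ∉ B, ∀ v, G.Adj u v → (r (u, v) = true ↔ v ∉ B)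

/-- The agreement graph `H(r)`: `u, v` adjacent iff adjacent in `G` and both report
each other truthful. -/
def agreementGraph {V : Type*} (G : SimpleGraph V) (r : V × V → Bool) : SimpleGraph V where
  Adj u v := G.Adj u v ∧ r (u, v) = true ∧ r (v, u) = true
  symm := by
    constructor
    rintro u v ⟨h1, h2, h3⟩
    exact ⟨h1.symm, h3, h2⟩
  loopless := by
    constructor
    rintro u ⟨h1, -, -⟩
    exact G.loopless.irrefl u h1

/-- `G` is a δ-good expander: (i) every set `U` with `|U| ≤ 2δn` has more than `|U|`
neighbors outside `U`; (ii) any two disjoint sets of sizes `≥ δn` and `≥ n/4` are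
joined by an edge. -/
def GoodExpander {V : Type*} [Fintype V] (G : SimpleGraph V) (δ : ℝ) : Prop :=
  (∀ U : Finset V, (U.card : ℝ) ≤ 2 * δ * (Fintype.card V : ℝ) →
      U.card < (Finset.univ.filter (fun v => v ∉ U ∧ ∃ u ∈ U, G.Adj u v)).card) ∧
  (∀ A₁ A₂ : Finset V, Disjoint A₁ A₂ →
      δ * (Fintype.card V : ℝ) ≤ (A₁.card : ℝ) →
      (Fintype.card V : ℝ) / 4 ≤ (A₂.card : ℝ) →
      ∃ a ∈ A₁, ∃ b ∈ A₂, G.Adj a b)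

/-- The subgraph of `G` induced on a set `T` (kept as a graph on the same vertex set). -/
def inducedOn {V : Type*} (G : SimpleGraph V) (T : Set V) : SimpleGraph V where
  Adj u v := G.Adj u v ∧ u ∈ T ∧ v ∈ T
  symm := by
    constructor
    rintro u v ⟨h1, h2, h3⟩
    exact ⟨h1.symm, h3, h2⟩
  loopless := by
    constructor
    rintro u ⟨h1, -, -⟩
    exact G.loopless.irrefl u h1


lemma aux_walk {V : Type*} (G : SimpleGraph V) (r : V × V → Bool) (B : Finset V)
    (hcons : Consistent G r B) :
    ∀ {u v : V}, u ∉ B → (agreementGraph G r).Walk u v →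
      (inducedOn G {x | x ∉ B}).Reachable u v := by
  intro u v hu p
  induction p with
  | nil => exact SimpleGraph.Reachable.refl _
  | @cons a b c h p ih =>
    have hb : b ∉ B := (hcons a hu b h.1).mp h.2.1
    have hab : (inducedOn G {x | x ∉ B}).Adj a b := ⟨h.1, hu, hb⟩
    exact hab.reachable.trans (ih hb)

/-- Every connected component of the subgraph `H'` of `G` induced on the
truthful set is also a connected component of the agreement graph `H(r)`. -/
theorem truthful_component_eq_agreement_component {V : Type*} [Fintype V]
    (G : SimpleGraph V) (r : V × V → Bool) (B : Finset V)
    (hcons : Consistent G r B) (u : V) (hu : u ∉ B) :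
    {v | (inducedOn G {x | x ∉ B}).Reachable u v} =
      {v | (agreementGraph G r).Reachable u v} := by
  ext v
  simp only [Set.mem_setOf_eq]
  constructor
  · intro ⟨p⟩
    have hle : inducedOn G {x | x ∉ B} ≤ agreementGraph G r := by
      intro a b hab
      exact ⟨hab.1, ((hcons a hab.2.1 b hab.1).mpr hab.2.2),
        ((hcons b hab.2.2 a hab.1.symm).mpr hab.2.1)⟩
    exact ⟨p.mapLe hle⟩
  · intro ⟨p⟩
    exact aux_walk G r B hcons hu p
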